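/- arXiv:1609.00920 — 2 statements merged into one kernel-verified Lean document; each statement's English description precedes it below -/
import Mathlib

section
/- Let 𝒟 be a category, let F, G, H : ℝ≤ ⥤ 𝒟 be functors, and let ε, δ ≥ 0. If F and G are ε-interleaved, and G and H are δ-interleaved, then F and H are (ε + δ)-interleaved. -/
open CategoryTheory

/-- The `ε`-translation functor on the poset category `ℝ≤`, sending `a` to `a + ε`. -/
def translationFunctor (ε : ℝ) : ℝ ⥤ ℝ :=
  Monotone.functor (f := fun a => a + ε) (fun _ _ h => by dsimp; linarith)

/-- Two diagrams `F G : ℝ≤ ⥤ 𝒟` are `ε`-interleaved: there are natural transformations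
`φ : F ⇒ G ∘ T_ε` and `ψ : G ⇒ F ∘ T_ε` with `ψ(a + ε) ∘ φ(a) = F(a ≤ a + 2ε)` and
`φ(a + ε) ∘ ψ(a) = G(a ≤ a + 2ε)` for all `a`. -/
def Interleaved {D : Type*} [Category D] (ε : ℝ) (hε : 0 ≤ ε) (F G : ℝ ⥤ D) : Prop :=
  ∃ (φ : F ⟶ translationFunctor ε ⋙ G) (ψ : G ⟶ translationFunctor ε ⋙ F),
    (∀ a : ℝ, φ.app a ≫ ψ.app (a + ε) =
      F.map (homOfLE (show a ≤ a + ε + ε by linarith))) ∧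
    (∀ a : ℝ, ψ.app a ≫ φ.app (a + ε) =
      G.map (homOfLE (show a ≤ a + ε + ε by linarith)))

lemma map_congr' {D : Type*} [Category D] (K : ℝ ⥤ D) {a b : ℝ} (f g : a ⟶ b) :
    K.map f = K.map g := by
  congr 1
  exact Subsingleton.elim f g

lemma eqToHom_eq_map {D : Type*} [Category D] (K : ℝ ⥤ D) {a b : ℝ} (e : a = b)
    (h : K.obj a = K.obj b) : eqToHom h = K.map (homOfLE e.le) := by
  subst e; simp

lemma tf_comp (ε δ : ℝ) :
    translationFunctor ε ⋙ translationFunctor δ = translationFunctor (ε + δ) := by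
  refine CategoryTheory.Functor.ext (fun a => by simp [translationFunctor, Monotone.functor]; ring) ?_
  intros; exact Subsingleton.elim _ _

lemma tri_aux {D : Type*} [Category D] {F G H : ℝ ⥤ D} {ε δ γ : ℝ}
    (hε : 0 ≤ ε) (hδ : 0 ≤ δ) (hγ : γ = ε + δ)
    (φ₁ : F ⟶ translationFunctor ε ⋙ G) (ψ₁ : G ⟶ translationFunctor ε ⋙ F)
    (φ₂ : G ⟶ translationFunctor δ ⋙ H) (ψ₂ : H ⟶ translationFunctor δ ⋙ G)
    (h₁ : ∀ a : ℝ, φ₁.app a ≫ ψ₁.app (a + ε) =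
      F.map (homOfLE (show a ≤ a + ε + ε by linarith)))
    (h₃ : ∀ a : ℝ, φ₂.app a ≫ ψ₂.app (a + δ) =
      G.map (homOfLE (show a ≤ a + δ + δ by linarith)))
    (a : ℝ)
    (p : H.obj (a + ε + δ) = H.obj (a + γ))
    (q : F.obj (a + γ + δ + ε) = F.obj (a + γ + γ)) :
    (φ₁.app a ≫ φ₂.app (a + ε) ≫ eqToHom p) ≫
      (ψ₂.app (a + γ) ≫ ψ₁.app (a + γ + δ) ≫ eqToHom q) =
    F.map (homOfLE (show a ≤ a + γ + γ by linarith)) := by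
  have e1 : eqToHom p = H.map (homOfLE (show a + ε + δ ≤ a + γ by linarith)) :=
    eqToHom_eq_map H (by rw [hγ]; ring) p
  have e2 : eqToHom q = F.map (homOfLE (show a + γ + δ + ε ≤ a + γ + γ by linarith)) :=
    eqToHom_eq_map F (by rw [hγ]; ring) q
  have n2 : H.map (homOfLE (show a + ε + δ ≤ a + γ by linarith)) ≫ ψ₂.app (a + γ) =
      ψ₂.app (a + ε + δ) ≫ G.map (homOfLE (show a + ε + δ + δ ≤ a + γ + δ by linarith)) :=
    ψ₂.naturality (homOfLE (show a + ε + δ ≤ a + γ by linarith))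
  have n1 : G.map (homOfLE (show a + ε + δ + δ ≤ a + γ + δ by linarith)) ≫
        ψ₁.app (a + γ + δ) =
      ψ₁.app (a + ε + δ + δ) ≫
        F.map (homOfLE (show a + ε + δ + δ + ε ≤ a + γ + δ + ε by linarith)) :=
    ψ₁.naturality (homOfLE (show a + ε + δ + δ ≤ a + γ + δ by linarith))
  have n1' : G.map (homOfLE (show a + ε ≤ a + ε + δ + δ by linarith)) ≫
        ψ₁.app (a + ε + δ + δ) =
      ψ₁.app (a + ε) ≫
        F.map (homOfLE (show a + ε + ε ≤ a + ε + δ + δ + ε by linarith)) :=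
    ψ₁.naturality (homOfLE (show a + ε ≤ a + ε + δ + δ by linarith))
  erw [e1, e2]
  simp only [Category.assoc]
  erw [Category.assoc, reassoc_of% n2]
  erw [Category.assoc]
  erw [← Category.assoc (φ₂.app (a + ε)), h₃ (a + ε)]
  erw [← Category.assoc _ (ψ₁.app (a + γ + δ)), n1]
  erw [Category.assoc]
  erw [← Category.assoc _ (ψ₁.app (a + ε + δ + δ)), n1']
  erw [Category.assoc]
  erw [← Category.assoc (φ₁.app a), h₁ a]
  erw [← F.map_comp, ← F.map_comp, ← F.map_comp]
  exact map_congr' F _ _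

/-- **triangle inequality.** If `F` and `G` are `ε`-interleaved and `G` and
`H` are `δ`-interleaved, then `F` and `H` are `(ε + δ)`-interleaved. -/
theorem interleaved_trans {D : Type*} [Category D] (F G H : ℝ ⥤ D)
    (ε δ : ℝ) (hε : 0 ≤ ε) (hδ : 0 ≤ δ)
    (hFG : Interleaved ε hε F G) (hGH : Interleaved δ hδ G H) :
    Interleaved (ε + δ) (by linarith) F H := by
  obtain ⟨φ₁, ψ₁, h₁, h₂⟩ := hFG
  obtain ⟨φ₂, ψ₂, h₃, h₄⟩ := hGH
  set γ := ε + δ with hγ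
  have c1 : translationFunctor ε ⋙ (translationFunctor δ ⋙ H) = translationFunctor γ ⋙ H := by
    rw [← Functor.assoc, tf_comp]
  have c2 : translationFunctor δ ⋙ (translationFunctor ε ⋙ F) = translationFunctor γ ⋙ F := by
    rw [← Functor.assoc, tf_comp, add_comm δ ε]
  refine ⟨φ₁ ≫ Functor.whiskerLeft (translationFunctor ε) φ₂ ≫ eqToHom c1,
    ψ₂ ≫ Functor.whiskerLeft (translationFunctor δ) ψ₁ ≫ eqToHom c2, ?_, ?_⟩
  · intro a
    have := tri_aux hε hδ hγ φ₁ ψ₁ φ₂ ψ₂ h₁ h₃ a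
      (Functor.congr_obj c1 a) (Functor.congr_obj c2 (a + γ))
    simp only [NatTrans.comp_app, Functor.whiskerLeft_app, eqToHom_app]
    exact this
  · intro a
    have := tri_aux hδ hε (show γ = δ + ε by rw [hγ]; ring) ψ₂ φ₂ ψ₁ φ₁ h₄ h₂ a
      (Functor.congr_obj c2 a) (Functor.congr_obj c1 (a + γ))
    simp only [NatTrans.comp_app, Functor.whiskerLeft_app, eqToHom_app]
    exact this
end

section
/- Let p ≥ 0 and let F, G : ℝ≤ ⥤ Vec be functors into vector spaces over ℤ/2ℤ that are ε-interleaved for some ε ≥ 0. Define the p-persistence diagram P_pF : ℝ≤ ⥤ Vec by (P_pF)(a) = image of F(a ≤ a + p) (a subspace of F(a + p)), with (P_pF)(a ≤ b) the restriction of F(a + p ≤ b + p), and define P_pG analogously. Then P_pF and P_pG are ε-interleaved. -/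
open CategoryTheory

set_option maxHeartbeats 1000000
set_option synthInstance.maxHeartbeats 200000

/-- Composition law for the structure maps of a diagram on the poset `ℝ≤`. -/
theorem map_comp_homOfLE {F : ℝ ⥤ ModuleCat (ZMod 2)} {a b c : ℝ} (hab : a ≤ b) (hbc : b ≤ c) :
    ∀ x : F.obj a, (F.map (homOfLE hbc)) ((F.map (homOfLE hab)) x)
      = (F.map (homOfLE (hab.trans hbc))) x := by
  intro x
  have : F.map (homOfLE hab) ≫ F.map (homOfLE hbc) = F.map (homOfLE (hab.trans hbc)) := by
    rw [← F.map_comp]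
    rfl
  rw [← this]
  rfl

/-- The `p`-persistence diagram `P_pF` of a diagram `F : ℝ≤ ⥤ Vec`: its value at `a`
is the image of `F(a ≤ a + p)` (a subspace of `F(a + p)`), and its structure map for
`a ≤ b` is the restriction of `F(a + p ≤ b + p)`. -/
noncomputable def persist (p : ℝ) (hp : 0 ≤ p) (F : ℝ ⥤ ModuleCat (ZMod 2)) :
    ℝ ⥤ ModuleCat (ZMod 2) where
  obj a := ModuleCat.of (ZMod 2)
    (LinearMap.range (F.map (homOfLE (show a ≤ a + p by linarith))).hom)
  map {a b} h :=
    ModuleCat.ofHom <| LinearMap.restrict (F.map (homOfLE (show a + p ≤ b + p by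
        have := leOfHom h; linarith))).hom
      (by
        rintro x ⟨y, rfl⟩
        exact ⟨F.map (homOfLE (leOfHom h)) y, by
          simp only [← LinearMap.comp_apply, ← ModuleCat.hom_comp, ← F.map_comp]
          rfl⟩)
  map_id a := by
    apply ModuleCat.hom_ext
    apply LinearMap.ext
    intro x
    apply Subtype.ext
    show (F.map (homOfLE _)).hom x.1 = x.1
    rw [show (homOfLE (le_refl (a + p))) = 𝟙 (a + p) from rfl, F.map_id]
    rfl
  map_comp {a b c} hab hbc := by
    apply ModuleCat.hom_ext
    apply LinearMap.ext
    intro x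
    apply Subtype.ext
    show (F.map (homOfLE _)).hom x.1 = (F.map (homOfLE _)).hom ((F.map (homOfLE _)).hom x.1)
    exact (map_comp_homOfLE _ _ x.1).symm

/-- The natural transformation induced on `p`-persistence diagrams by a transformation
`φ : F ⇒ G ∘ T_ε`. -/
noncomputable def persistNat (p : ℝ) (hp : 0 ≤ p) (ε : ℝ) (hε : 0 ≤ ε)
    (F G : ℝ ⥤ ModuleCat (ZMod 2)) (φ : F ⟶ translationFunctor ε ⋙ G) :
    persist p hp F ⟶ translationFunctor ε ⋙ persist p hp G where
  app a := ModuleCat.ofHom <| LinearMap.restrict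
      (LinearMap.comp (G.map (homOfLE (show a + p + ε ≤ a + ε + p by linarith))).hom
        (φ.app (a + p)).hom)
      (by
        rintro x ⟨y, rfl⟩
        refine ⟨φ.app a y, ?_⟩
        have hnat := ConcreteCategory.congr_hom
          (φ.naturality (homOfLE (show a ≤ a + p by linarith))) y
        dsimp at hnat ⊢
        have hnat' : (φ.app (a + p)) ((F.map (homOfLE (show a ≤ a + p by linarith))) y)
            = (G.map (homOfLE (show a + ε ≤ a + p + ε by linarith))) ((φ.app a) y) := hnat
        exact ((congrArg (fun z => (G.map (homOfLE
            (show a + p + ε ≤ a + ε + p by linarith))) z) hnat').trans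
          (map_comp_homOfLE _ _ _)).symm)
  naturality {a b} hab := by
    apply ModuleCat.hom_ext
    apply LinearMap.ext
    intro x
    apply Subtype.ext
    have hab' := leOfHom hab
    show (G.map (homOfLE _)) ((φ.app (b + p)) ((F.map (homOfLE _)) x.1))
      = (G.map (homOfLE _)) ((G.map (homOfLE _)) ((φ.app (a + p)) x.1))
    have hnat := ConcreteCategory.congr_hom
      (φ.naturality (homOfLE (show a + p ≤ b + p by linarith))) x.1
    dsimp at hnat
    have hnat' : (φ.app (b + p)) ((F.map (homOfLE (show a + p ≤ b + p by linarith))) x.1)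
        = (G.map (homOfLE (show a + p + ε ≤ b + p + ε by linarith))) ((φ.app (a + p)) x.1) :=
      hnat
    exact ((congrArg (fun z => (G.map (homOfLE
          (show b + p + ε ≤ b + ε + p by linarith))) z) hnat').trans
        (map_comp_homOfLE _ _ _)).trans (map_comp_homOfLE _ _ _).symm

theorem persistNat_app_coe (p : ℝ) (hp : 0 ≤ p) (ε : ℝ) (hε : 0 ≤ ε)
    (F G : ℝ ⥤ ModuleCat (ZMod 2)) (φ : F ⟶ translationFunctor ε ⋙ G) (a : ℝ)
    (x : (persist p hp F).obj a) :
    Subtype.val ((persistNat p hp ε hε F G φ).app a x)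
      = (G.map (homOfLE (show a + p + ε ≤ a + ε + p by linarith))) ((φ.app (a + p)) (Subtype.val x)) :=
  rfl

/-- If `F, G : ℝ≤ ⥤ Vec` are `ε`-interleaved, then for every `p ≥ 0`
the `p`-persistence diagrams `P_pF` and `P_pG` are `ε`-interleaved. -/
theorem persist_interleaved (p : ℝ) (hp : 0 ≤ p) (F G : ℝ ⥤ ModuleCat (ZMod 2))
    (ε : ℝ) (hε : 0 ≤ ε) (h : Interleaved ε hε F G) :
    Interleaved ε hε (persist p hp F) (persist p hp G) := by
  obtain ⟨φ, ψ, hφψ, hψφ⟩ := h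
  refine ⟨persistNat p hp ε hε F G φ, persistNat p hp ε hε G F ψ, ?_, ?_⟩
  · intro a
    apply ModuleCat.hom_ext
    apply LinearMap.ext
    intro x
    apply Subtype.ext
    show (F.map (homOfLE _)) ((ψ.app (a + ε + p))
        ((G.map (homOfLE _)) ((φ.app (a + p)) x.1)))
      = (F.map (homOfLE _)) x.1
    have hnat := ConcreteCategory.congr_hom
      (ψ.naturality (homOfLE (show a + p + ε ≤ a + ε + p by linarith)))
      ((φ.app (a + p)) x.1)
    dsimp at hnat
    have hnat' : (ψ.app (a + ε + p))
          ((G.map (homOfLE (show a + p + ε ≤ a + ε + p by linarith))) ((φ.app (a + p)) x.1))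
        = (F.map (homOfLE (show a + p + ε + ε ≤ a + ε + p + ε by linarith)))
          ((ψ.app (a + p + ε)) ((φ.app (a + p)) x.1)) := hnat
    have hcomp := ConcreteCategory.congr_hom (hφψ (a + p)) x.1
    have hcomp' : (ψ.app (a + p + ε)) ((φ.app (a + p)) x.1)
        = (F.map (homOfLE (show a + p ≤ a + p + ε + ε by linarith))) x.1 := hcomp
    have step : (ψ.app (a + ε + p))
          ((G.map (homOfLE (show a + p + ε ≤ a + ε + p by linarith))) ((φ.app (a + p)) x.1))
        = (F.map (homOfLE (show a + p + ε + ε ≤ a + ε + p + ε by linarith)))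
          ((F.map (homOfLE (show a + p ≤ a + p + ε + ε by linarith))) x.1) :=
      hnat'.trans (congrArg (fun z => (F.map (homOfLE
        (show a + p + ε + ε ≤ a + ε + p + ε by linarith))) z) hcomp')
    exact ((congrArg (fun z => (F.map (homOfLE
          (show a + ε + p + ε ≤ a + ε + ε + p by linarith))) z) step).trans
        ((congrArg (fun z => (F.map (homOfLE
          (show a + ε + p + ε ≤ a + ε + ε + p by linarith))) z)
          (map_comp_homOfLE _ _ _)).trans (map_comp_homOfLE _ _ _)))
  · intro a
    apply ModuleCat.hom_ext
    apply LinearMap.ext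
    intro x
    apply Subtype.ext
    show (G.map (homOfLE _)) ((φ.app (a + ε + p))
        ((F.map (homOfLE _)) ((ψ.app (a + p)) x.1)))
      = (G.map (homOfLE _)) x.1
    have hnat := ConcreteCategory.congr_hom
      (φ.naturality (homOfLE (show a + p + ε ≤ a + ε + p by linarith)))
      ((ψ.app (a + p)) x.1)
    dsimp at hnat
    have hnat' : (φ.app (a + ε + p))
          ((F.map (homOfLE (show a + p + ε ≤ a + ε + p by linarith))) ((ψ.app (a + p)) x.1))
        = (G.map (homOfLE (show a + p + ε + ε ≤ a + ε + p + ε by linarith)))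
          ((φ.app (a + p + ε)) ((ψ.app (a + p)) x.1)) := hnat
    have hcomp := ConcreteCategory.congr_hom (hψφ (a + p)) x.1
    have hcomp' : (φ.app (a + p + ε)) ((ψ.app (a + p)) x.1)
        = (G.map (homOfLE (show a + p ≤ a + p + ε + ε by linarith))) x.1 := hcomp
    have step : (φ.app (a + ε + p))
          ((F.map (homOfLE (show a + p + ε ≤ a + ε + p by linarith))) ((ψ.app (a + p)) x.1))
        = (G.map (homOfLE (show a + p + ε + ε ≤ a + ε + p + ε by linarith)))
          ((G.map (homOfLE (show a + p ≤ a + p + ε + ε by linarith))) x.1) :=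
      hnat'.trans (congrArg (fun z => (G.map (homOfLE
        (show a + p + ε + ε ≤ a + ε + p + ε by linarith))) z) hcomp')
    exact ((congrArg (fun z => (G.map (homOfLE
          (show a + ε + p + ε ≤ a + ε + ε + p by linarith))) z) step).trans
        ((congrArg (fun z => (G.map (homOfLE
          (show a + ε + p + ε ≤ a + ε + ε + p by linarith))) z)
          (map_comp_homOfLE _ _ _)).trans (map_comp_homOfLE _ _ _)))
end
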